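/- Let X be a real Banach space and A ⊆ X a compact set not containing 0. Let f₁,…,f_m ∈ S_{X*} be weak*-exposed points of B_{X*} such that max{fᵢ(y) : 1 ≤ i ≤ m} > 0 for every y ∈ A. Then there exist x₁,…,x_m ∈ X, λ₁,…,λ_m > 0 and radii 0 < rᵢ ≤ λᵢ‖xᵢ‖ such that A ⊆ ⋃_{i=1}^m B(λᵢxᵢ, rᵢ), i.e., A has a ball-covering by m balls none of which contains 0. -/

import Mathlib

open Metric Filter Set Topology NormedSpace

private lemma clusterPt_eq_of_tendsto {u : ℕ → ℝ} {a b : ℝ}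
    (h : MapClusterPt a atTop u) (h2 : Tendsto u atTop (𝓝 b)) : a = b := by
  have hne : (𝓝 a ⊓ Filter.map u atTop).NeBot := h
  exact tendsto_nhds_unique (f := id) (l := 𝓝 a ⊓ Filter.map u atTop)
    (tendsto_id.mono_left inf_le_left) (le_trans inf_le_right h2)

private lemma clusterPt_le_of_le {u : ℕ → ℝ} {a : ℝ}
    (h : MapClusterPt a atTop u) (h2 : ∀ n, u n ≤ 0) : a ≤ 0 := by
  have h3 : Filter.map u atTop ≤ 𝓟 (Set.Iic (0:ℝ)) := by
    simp only [Filter.le_principal_iff, Filter.mem_map]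
    exact Filter.univ_mem' h2
  have := mem_closure_iff_clusterPt.mpr (h.clusterPt.mono h3)
  rwa [closure_Iic, Set.mem_Iic] at this

private lemma keyA {X : Type*} [NormedAddCommGroup X] [NormedSpace ℝ X]
    (x : X) (hx : x ≠ 0) (f : X →L[ℝ] ℝ) (hf1 : ‖f‖ = 1)
    (hmax : ∀ g : X →L[ℝ] ℝ, ‖g‖ ≤ 1 → g x ≤ f x)
    (huniq : ∀ g : X →L[ℝ] ℝ, ‖g‖ ≤ 1 → g x = f x → g = f)
    (y : X) (hy : 0 < f y) : ∃ t : ℝ, 0 < t ∧ ‖x - t • y‖ < ‖x‖ := by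
  have hxpos : (0:ℝ) < ‖x‖ := norm_pos_iff.mpr hx
  have hfx : f x = ‖x‖ := by
    obtain ⟨g, hg1, hgx⟩ := exists_dual_vector ℝ x (norm_ne_zero_iff.mpr hx)
    have h1 : g x = ‖x‖ := by exact_mod_cast hgx
    have h1' : ‖x‖ ≤ f x := h1 ▸ hmax g hg1.le
    have h2 : f x ≤ ‖x‖ := by
      calc f x ≤ ‖f x‖ := le_abs_self _
      _ ≤ ‖f‖ * ‖x‖ := f.le_opNorm x
      _ = ‖x‖ := by rw [hf1, one_mul]
    linarith
  by_contra hcon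
  push_neg at hcon
  -- for each n, pick a norming functional for x - (1/(n+1)) • y
  set t : ℕ → ℝ := fun n => 1 / (n + 1) with ht
  have htpos : ∀ n, 0 < t n := fun n => by positivity
  have hge : ∀ n, ‖x‖ ≤ ‖x - t n • y‖ := fun n => hcon (t n) (htpos n)
  have hne : ∀ n, x - t n • y ≠ 0 := fun n => by
    intro h
    have h2 := hge n
    rw [h, norm_zero] at h2
    linarith
  choose G hG1 hGx' using fun n => exists_dual_vector ℝ (x - t n • y) (norm_ne_zero_iff.mpr (hne n))
  have hGx : ∀ n, G n (x - t n • y) = ‖x - t n • y‖ := fun n => by exact_mod_cast hGx' n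
  have hGle : ∀ n (z : X), G n z ≤ ‖z‖ := fun n z => by
    calc G n z ≤ ‖G n z‖ := le_abs_self _
    _ ≤ ‖G n‖ * ‖z‖ := (G n).le_opNorm z
    _ = ‖z‖ := by rw [hG1 n, one_mul]
  have hGy : ∀ n, G n y ≤ 0 := by
    intro n
    have h1 : G n x - t n * G n y = ‖x - t n • y‖ := by
      have := hGx n
      simpa [map_sub, map_smul, smul_eq_mul] using this
    have h2 : G n x ≤ ‖x‖ := hGle n x
    nlinarith [hge n, htpos n]
  have hGxlb : ∀ n, ‖x‖ - t n * ‖y‖ ≤ G n x := by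
    intro n
    have h1 : G n x - t n * G n y = ‖x - t n • y‖ := by
      simpa [map_sub, map_smul, smul_eq_mul] using hGx n
    have h3 : -‖y‖ ≤ G n y := by
      have h4 := hGle n (-y)
      rw [map_neg, norm_neg] at h4
      linarith
    nlinarith [hge n, htpos n]
  have hGxub : ∀ n, G n x ≤ ‖x‖ := fun n => hGle n x
  have htlim : Tendsto t atTop (𝓝 0) := tendsto_one_div_add_atTop_nhds_zero_nat
  have hGxlim : Tendsto (fun n => G n x) atTop (𝓝 ‖x‖) := by
    have hl : Tendsto (fun n => ‖x‖ - t n * ‖y‖) atTop (𝓝 ‖x‖) := by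
      have h5 : Tendsto (fun n => ‖x‖ - t n * ‖y‖) atTop (𝓝 (‖x‖ - 0 * ‖y‖)) :=
        tendsto_const_nhds.sub (htlim.mul_const _)
      simpa using h5
    exact tendsto_of_tendsto_of_tendsto_of_le_of_le hl tendsto_const_nhds hGxlb hGxub
  -- Banach-Alaoglu
  have hK : IsCompact (WeakDual.toStrongDual ⁻¹' closedBall (0 : StrongDual ℝ X) 1) :=
    WeakDual.isCompact_closedBall 0 1
  have hmem : Filter.map (fun n => (StrongDual.toWeakDual (G n) : WeakDual ℝ X)) atTop ≤
      𝓟 (WeakDual.toStrongDual ⁻¹' closedBall (0 : StrongDual ℝ X) 1) := by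
    simp only [Filter.le_principal_iff, Filter.mem_map]
    refine Filter.univ_mem' fun n => ?_
    simp [mem_closedBall_zero_iff, hG1 n]
  obtain ⟨g, hgK, hclus⟩ := hK.exists_mapClusterPt hmem
  have hgnorm : ‖WeakDual.toStrongDual g‖ ≤ 1 := by
    simpa [mem_closedBall_zero_iff] using hgK
  have hclusx : MapClusterPt (g x) atTop (fun n => G n x) :=
    (hclus.continuousAt_comp (WeakDual.eval_continuous x).continuousAt)
  have hclusy : MapClusterPt (g y) atTop (fun n => G n y) :=
    (hclus.continuousAt_comp (WeakDual.eval_continuous y).continuousAt)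
  have hgx : g x = ‖x‖ := clusterPt_eq_of_tendsto hclusx hGxlim
  have hgy : g y ≤ 0 := clusterPt_le_of_le hclusy hGy
  have heq : WeakDual.toStrongDual g = f :=
    huniq _ hgnorm (show g x = f x from hgx.trans hfx.symm)
  have : f y ≤ 0 := by rw [← heq]; exact hgy
  linarith

private lemma ball_grow {X : Type*} [NormedAddCommGroup X] [NormedSpace ℝ X]
    {x y : X} {a b : ℝ} (ha : 0 < a) (hab : a ≤ b)
    (h : ‖y - a • x‖ < a * ‖x‖) : ‖y - b • x‖ < b * ‖x‖ := by
  have h1 : y - b • x = (y - a • x) + (a - b) • x := by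
    rw [sub_smul]; abel
  have h2 : ‖y - b • x‖ ≤ ‖y - a • x‖ + ‖(a - b) • x‖ := by
    rw [h1]; exact norm_add_le _ _
  have h3 : ‖(a - b) • x‖ = (b - a) * ‖x‖ := by
    rw [norm_smul, Real.norm_eq_abs, abs_of_nonpos (by linarith), neg_sub]
  nlinarith [norm_nonneg x]

/-- A compact set A avoiding the origin admits a ball-covering by m
origin-avoiding balls, provided there are m weak*-exposed points f₁,…,f_m of the dual
unit ball with max fᵢ(y) > 0 for all y ∈ A. -/
theorem stmt6 {X : Type*} [NormedAddCommGroup X] [NormedSpace ℝ X] [CompleteSpace X]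
    (A : Set X) (hA : IsCompact A) (h0 : (0 : X) ∉ A) (m : ℕ)
    (f : Fin m → (X →L[ℝ] ℝ)) (hf : ∀ i, ‖f i‖ = 1)
    (hexp : ∀ i, ∃ xi : X, xi ≠ 0 ∧ (∀ g : X →L[ℝ] ℝ, ‖g‖ ≤ 1 → g xi ≤ f i xi) ∧
      (∀ g : X →L[ℝ] ℝ, ‖g‖ ≤ 1 → g xi = f i xi → g = f i))
    (hpos : ∀ y ∈ A, ∃ i, 0 < f i y) :
    ∃ (x : Fin m → X) (l r : Fin m → ℝ),
      (∀ i, 0 < l i ∧ 0 < r i ∧ r i ≤ l i * ‖x i‖) ∧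
      A ⊆ ⋃ i, ball ((l i) • (x i)) (r i) := by
  choose ξ hξne hξmax hξuniq using hexp
  set U : Fin m × ℝ → Set X :=
    fun p => if 0 < p.2 then ball (p.2 • ξ p.1) (p.2 * ‖ξ p.1‖) else ∅ with hU
  have hUopen : ∀ p, IsOpen (U p) := by
    intro p
    by_cases h : 0 < p.2
    · simp only [hU, if_pos h]; exact isOpen_ball
    · simp only [hU, if_neg h]; exact isOpen_empty
  have hcover : A ⊆ ⋃ p, U p := by
    intro y hyA
    obtain ⟨i, hi⟩ := hpos y hyA
    obtain ⟨t, ht, hlt⟩ := keyA (ξ i) (hξne i) (f i) (hf i) (hξmax i) (hξuniq i) y hi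
    have htinv : (0:ℝ) < t⁻¹ := inv_pos.mpr ht
    refine Set.mem_iUnion.mpr ⟨(i, t⁻¹), ?_⟩
    simp only [hU, if_pos htinv]
    rw [mem_ball, dist_eq_norm]
    have h1 : y - t⁻¹ • ξ i = (-t⁻¹) • (ξ i - t • y) := by
      rw [neg_smul, smul_sub, smul_smul, inv_mul_cancel₀ ht.ne', one_smul]
      abel
    calc ‖y - t⁻¹ • ξ i‖ = t⁻¹ * ‖ξ i - t • y‖ := by
          rw [h1, norm_smul, Real.norm_eq_abs, abs_neg, abs_of_pos htinv]
      _ < t⁻¹ * ‖ξ i‖ := by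
          exact mul_lt_mul_of_pos_left hlt htinv
  obtain ⟨s, hs⟩ := hA.elim_finite_subcover U hUopen hcover
  set Λ : ℝ := 1 + ∑ p ∈ s, |p.2| with hΛ
  have hΛpos : 0 < Λ := by
    have : (0:ℝ) ≤ ∑ p ∈ s, |p.2| := Finset.sum_nonneg fun p _ => abs_nonneg _
    linarith
  have hΛge : ∀ p ∈ s, p.2 ≤ Λ := by
    intro p hp
    have h1 : |p.2| ≤ ∑ q ∈ s, |q.2| :=
      Finset.single_le_sum (f := fun q : Fin m × ℝ => |q.2|) (fun q _ => abs_nonneg _) hp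
    have := le_abs_self p.2
    linarith
  refine ⟨ξ, fun _ => Λ, fun i => Λ * ‖ξ i‖,
    fun i => ⟨hΛpos, mul_pos hΛpos (norm_pos_iff.mpr (hξne i)), le_refl _⟩, ?_⟩
  intro y hy
  obtain ⟨p, hp, hyp⟩ := Set.mem_iUnion₂.mp (hs hy)
  by_cases hpp : 0 < p.2
  · simp only [hU, if_pos hpp] at hyp
    rw [mem_ball, dist_eq_norm] at hyp
    refine Set.mem_iUnion.mpr ⟨p.1, ?_⟩
    rw [mem_ball, dist_eq_norm]
    exact ball_grow hpp (hΛge p hp) hyp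
  · simp only [hU, if_neg hpp] at hyp
    exact absurd hyp (Set.notMem_empty y)
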